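/- Let p, q ∈ [1,∞] with 1/p + 1/q = 1, let F ⊆ [0,1]ⁿ be a nonempty convex compact set, η > 0, α ≥ 1, and let R : ℝⁿ → ℝ be differentiable and β-strongly convex with respect to the ℓ_p norm on F for some β > 0, with Bregman divergence D_R(a,b) = R(a) − R(b) − ⟨∇R(b), a−b⟩. Let x₀ = 0 and x₁,…,x_T ∈ [0,1]ⁿ, and define the Accurate Mirror Descent iterates: g₁ = f₁ ∈ F minimizes R over F; g_{t+1} ∈ F minimizes g ↦ η⟨g, x_t⟩ + D_R(g, g_t) over F; and f_{t+1} ∈ F minimizes f ↦ ηα⟨f, x_t⟩ + D_R(f, g_{t+1}) over F. Then for every f' ∈ F: Σ_{t=1}^T (⟨f_t, x_t⟩ − (1/α)⟨f', x_t⟩ − ((α−1)/α)⟨g_{t+1}, x_t⟩) ≤ (ηα/(2β)) Σ_{t=1}^T ‖x_t − x_{t-1}‖_q² + R_max²/(ηα), where R_max² := max_{f∈F} R(f) − min_{f∈F} R(f). -/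

import Mathlib

open scoped BigOperators ENNReal
open Filter Topology

noncomputable section

/-- The bilinear pairing `⟨a, b⟩ = ∑ i, a i * b i` on `ℝⁿ`. -/
def ip {n : ℕ} (a b : Fin n → ℝ) : ℝ := ∑ i, a i * b i

/-- The `ℓ_p` norm on `ℝⁿ`, for `p ∈ [1, ∞]` (`‖a‖_∞ = max_i |a i|`). -/
def lpNorm {n : ℕ} (p : ℝ≥0∞) (a : Fin n → ℝ) : ℝ :=
  if p = ⊤ then ⨆ i, |a i| else (∑ i, |a i| ^ p.toReal) ^ (1 / p.toReal)

/-- `R` is `β`-strongly convex with respect to the `ℓ_p` norm on the convex set `F`. -/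
def StronglyConvexOnWrt {n : ℕ} (F : Set (Fin n → ℝ)) (β : ℝ) (p : ℝ≥0∞)
    (R : (Fin n → ℝ) → ℝ) : Prop :=
  ∀ a ∈ F, ∀ b ∈ F, ∀ l : ℝ, 0 ≤ l → l ≤ 1 →
    R (l • a + (1 - l) • b) ≤
      l * R a + (1 - l) * R b - β / 2 * l * (1 - l) * (lpNorm p (a - b)) ^ 2

/-- The Bregman divergence `D_R(a,b) = R a - R b - ⟨∇R b, a - b⟩`. -/
def bregman {n : ℕ} (R : (Fin n → ℝ) → ℝ) (a b : Fin n → ℝ) : ℝ :=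
  R a - R b - fderiv ℝ R b (a - b)

lemma ip_sub_left {n : ℕ} (a b y : Fin n → ℝ) : ip (a - b) y = ip a y - ip b y := by
  simp [ip, sub_mul, Finset.sum_sub_distrib]

lemma ip_add_smul_left {n : ℕ} (a d y : Fin n → ℝ) (l : ℝ) :
    ip (a + l • d) y = ip a y + l * ip d y := by
  simp [ip, add_mul, Finset.sum_add_distrib, Finset.mul_sum, mul_assoc]

lemma ip_sub_right {n : ℕ} (a y z : Fin n → ℝ) : ip a (y - z) = ip a y - ip a z := by
  simp [ip, mul_sub, Finset.sum_sub_distrib]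

lemma ip_zero_right {n : ℕ} (a : Fin n → ℝ) : ip a 0 = 0 := by simp [ip]

lemma lpNorm_nonneg {n : ℕ} (p : ℝ≥0∞) (a : Fin n → ℝ) : 0 ≤ lpNorm p a := by
  unfold lpNorm
  split
  · exact Real.iSup_nonneg fun i => abs_nonneg _
  · exact Real.rpow_nonneg (Finset.sum_nonneg fun i _ => Real.rpow_nonneg (abs_nonneg _) _) _

lemma lpNorm_sub_comm {n : ℕ} (p : ℝ≥0∞) (a b : Fin n → ℝ) :
    lpNorm p (a - b) = lpNorm p (b - a) := by
  have h : ∀ i, |(a - b) i| = |(b - a) i| := fun i => by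
    simp [abs_sub_comm (a i) (b i)]
  simp only [lpNorm, h]

lemma bregman_self {n : ℕ} (R : (Fin n → ℝ) → ℝ) (w : Fin n → ℝ) : bregman R w w = 0 := by
  simp [bregman]

lemma dirDeriv_le {m : ℕ} {φ : (Fin m → ℝ) → ℝ} {b d : Fin m → ℝ}
    (hφ : DifferentiableAt ℝ φ b) {c : ℝ → ℝ} {c0 : ℝ}
    (hc : Tendsto c (𝓝[>] (0:ℝ)) (𝓝 c0))
    (h : ∀ l : ℝ, 0 < l → l ≤ 1 → φ (b + l • d) ≤ φ b + l * c l) :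
    fderiv ℝ φ b d ≤ c0 := by
  have hγ : HasDerivAt (fun l : ℝ => b + l • d) d 0 := by
    simpa using ((hasDerivAt_id (0:ℝ)).smul_const d).const_add b
  have hψ : HasDerivAt (fun l : ℝ => φ (b + l • d)) (fderiv ℝ φ b d) 0 := by
    have hφ' : HasFDerivAt φ (fderiv ℝ φ b) (b + (0:ℝ) • d) := by
      simpa using hφ.hasFDerivAt
    exact hφ'.comp_hasDerivAt (x := (0:ℝ)) hγ
  rw [hasDerivAt_iff_tendsto_slope] at hψ
  have hψ' : Tendsto (slope (fun l : ℝ => φ (b + l • d)) 0) (𝓝[>] (0:ℝ))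
      (𝓝 (fderiv ℝ φ b d)) :=
    hψ.mono_left (nhdsWithin_mono 0 fun y hy => ne_of_gt hy)
  refine le_of_tendsto_of_tendsto hψ' hc ?_
  filter_upwards [Ioc_mem_nhdsGT_of_mem (Set.mem_Ico.2 ⟨le_refl (0:ℝ), zero_lt_one⟩)] with l hl
  have h0 : (0:ℝ) < l := hl.1
  have hle := h l hl.1 hl.2
  show slope (fun l : ℝ => φ (b + l • d)) 0 l ≤ c l
  rw [slope_def_field]
  rw [sub_zero, div_le_iff₀ h0]
  simp only [zero_smul, add_zero]
  nlinarith [hle]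

lemma dirDeriv_ge {m : ℕ} {φ : (Fin m → ℝ) → ℝ} {b d : Fin m → ℝ}
    (hφ : DifferentiableAt ℝ φ b) {c : ℝ → ℝ} {c0 : ℝ}
    (hc : Tendsto c (𝓝[>] (0:ℝ)) (𝓝 c0))
    (h : ∀ l : ℝ, 0 < l → l ≤ 1 → φ b + l * c l ≤ φ (b + l • d)) :
    c0 ≤ fderiv ℝ φ b d := by
  have h' := dirDeriv_le (φ := fun u => -φ u) hφ.neg (c := fun l => -(c l)) (c0 := -c0) hc.neg
    (fun l hl hl1 => by have := h l hl hl1; linarith)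
  rw [fderiv_fun_neg] at h'
  simp only [ContinuousLinearMap.neg_apply] at h'
  linarith

lemma bregman_ge {n : ℕ} {F : Set (Fin n → ℝ)} {β : ℝ} {p : ℝ≥0∞} {R : (Fin n → ℝ) → ℝ}
    (hdiff : Differentiable ℝ R) (hRsc : StronglyConvexOnWrt F β p R)
    {a b : Fin n → ℝ} (ha : a ∈ F) (hb : b ∈ F) :
    β / 2 * lpNorm p (a - b) ^ 2 ≤ bregman R a b := by
  set K := lpNorm p (a - b) ^ 2 with hK
  have hcont : Continuous fun l : ℝ => (R a - R b) - β / 2 * (1 - l) * K := by continuity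
  have hc : Tendsto (fun l : ℝ => (R a - R b) - β / 2 * (1 - l) * K) (𝓝[>] (0:ℝ))
      (𝓝 ((R a - R b) - β / 2 * K)) := by
    have := (hcont.tendsto 0).mono_left (nhdsWithin_le_nhds (s := Set.Ioi (0:ℝ)))
    simpa using this
  have key : fderiv ℝ R b (a - b) ≤ R a - R b - β / 2 * K := by
    apply dirDeriv_le (hdiff b) hc
    intro l hl hl1
    have hsc := hRsc a ha b hb l hl.le hl1
    have heq : l • a + (1 - l) • b = b + l • (a - b) := by module
    rw [heq, ← hK] at hsc
    nlinarith [hsc]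
  simp only [bregman]
  linarith

lemma opt_fderiv {n : ℕ} {F : Set (Fin n → ℝ)} (hFconv : Convex ℝ F)
    {R : (Fin n → ℝ) → ℝ} (hdiff : Differentiable ℝ R)
    {κ : ℝ} {y v u₀ u : Fin n → ℝ} (hu₀ : u₀ ∈ F) (hu : u ∈ F)
    (hmin : ∀ w ∈ F, κ * ip u₀ y + bregman R u₀ v ≤ κ * ip w y + bregman R w v) :
    κ * ip u₀ y - κ * ip u y ≤ bregman R u v - bregman R u u₀ - bregman R u₀ v := by
  set d := u - u₀ with hd
  have key : fderiv ℝ (fun w => -R w) u₀ d ≤ κ * ip d y - fderiv ℝ R v d := by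
    apply dirDeriv_le (hdiff u₀).neg tendsto_const_nhds
    intro l hl hl1
    have hmem : u₀ + l • d ∈ F := by
      have := hFconv hu₀ hu (by linarith : (0:ℝ) ≤ 1 - l) hl.le (by ring)
      have heq : (1 - l) • u₀ + l • u = u₀ + l • d := by rw [hd]; module
      rwa [heq] at this
    have hm := hmin _ hmem
    simp only [bregman] at hm
    have e1 : ip (u₀ + l • d) y = ip u₀ y + l * ip d y := ip_add_smul_left _ _ _ _
    have e2 : fderiv ℝ R v (u₀ + l • d - v) = fderiv ℝ R v (u₀ - v) + l * fderiv ℝ R v d := by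
      have heq : u₀ + l • d - v = (u₀ - v) + l • d := by module
      rw [heq, map_add, map_smul, smul_eq_mul]
    rw [e1, e2] at hm
    show -R (u₀ + l • d) ≤ -R u₀ + l * (κ * ip d y - fderiv ℝ R v d)
    nlinarith [hm]
  rw [fderiv_fun_neg] at key
  simp only [ContinuousLinearMap.neg_apply] at key
  have e3 : fderiv ℝ R v (u - v) - fderiv ℝ R v (u₀ - v) = fderiv ℝ R v d := by
    rw [← map_sub]; congr 1; rw [hd]; abel
  have e4 : ip u y - ip u₀ y = ip d y := by rw [hd, ip_sub_left]
  have e5 : κ * ip d y = κ * ip u y - κ * ip u₀ y := by rw [← e4]; ring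
  simp only [bregman]
  linarith [key, e3, e5]

lemma young_aux {c : ℝ} (hc : 0 < c) (A B : ℝ) : A * B ≤ c / 2 * A ^ 2 + 1 / (2 * c) * B ^ 2 := by
  have h2 : 2 * c * (A * B) ≤ c ^ 2 * A ^ 2 + B ^ 2 := by nlinarith [sq_nonneg (c * A - B)]
  have hc2 : (0:ℝ) < 2 * c := by linarith
  calc A * B = 2 * c * (A * B) / (2 * c) := by field_simp
    _ ≤ (c ^ 2 * A ^ 2 + B ^ 2) / (2 * c) := by gcongr
    _ = c / 2 * A ^ 2 + 1 / (2 * c) * B ^ 2 := by field_simp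

lemma telescope (h : ℕ → ℝ) (T : ℕ) :
    ∑ t ∈ Finset.Icc 1 T, (h t - h (t + 1)) = h 1 - h (T + 1) := by
  induction T with
  | zero => simp
  | succ T ih => rw [Finset.sum_Icc_succ_top (by omega), ih]; ring

lemma lpNorm_one_eq {n : ℕ} (a : Fin n → ℝ) : lpNorm 1 a = ∑ i, |a i| := by
  simp [lpNorm]

lemma lpNorm_top_eq {n : ℕ} (a : Fin n → ℝ) : lpNorm ⊤ a = ⨆ i, |a i| := by
  simp [lpNorm]

lemma sum_abs_mul_le_sup {n : ℕ} (a b : Fin n → ℝ) :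
    ∑ i, |a i| * |b i| ≤ (∑ i, |a i|) * ⨆ i, |b i| := by
  have hS : ∀ i, |b i| ≤ ⨆ j, |b j| := fun i =>
    le_ciSup (f := fun j => |b j|) (Set.Finite.bddAbove (Set.finite_range _)) i
  calc ∑ i, |a i| * |b i| ≤ ∑ i, |a i| * ⨆ j, |b j| :=
        Finset.sum_le_sum fun i _ => mul_le_mul_of_nonneg_left (hS i) (abs_nonneg _)
    _ = (∑ i, |a i|) * ⨆ j, |b j| := by rw [Finset.sum_mul]

lemma ip_le_lpNorm_mul {n : ℕ} {p q : ℝ≥0∞} (hp : 1 ≤ p) (hq : 1 ≤ q)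
    (hpq : 1 / p + 1 / q = 1) (a b : Fin n → ℝ) :
    ip a b ≤ lpNorm p a * lpNorm q b := by
  have habs : ip a b ≤ ∑ i, |a i| * |b i| := by
    apply Finset.sum_le_sum; intro i _
    calc a i * b i ≤ |a i * b i| := le_abs_self _
      _ = |a i| * |b i| := abs_mul _ _
  have hp0 : p ≠ 0 := by intro h; rw [h] at hp; simp at hp
  have hq0 : q ≠ 0 := by intro h; rw [h] at hq; simp at hq
  by_cases hqt : q = ⊤
  · have hp1 : p = 1 := by
      rw [hqt] at hpq
      simp only [one_div, ENNReal.inv_top, add_zero] at hpq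
      rwa [ENNReal.inv_eq_one] at hpq
    rw [hp1, hqt, lpNorm_one_eq, lpNorm_top_eq]
    exact habs.trans (sum_abs_mul_le_sup a b)
  by_cases hpt : p = ⊤
  · have hq1 : q = 1 := by
      rw [hpt] at hpq
      simp only [one_div, ENNReal.inv_top, zero_add] at hpq
      rwa [ENNReal.inv_eq_one] at hpq
    rw [hq1, hpt, lpNorm_one_eq, lpNorm_top_eq]
    refine habs.trans ?_
    calc ∑ i, |a i| * |b i| = ∑ i, |b i| * |a i| := by simp [mul_comm]
      _ ≤ (∑ i, |b i|) * ⨆ i, |a i| := sum_abs_mul_le_sup b a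
      _ = (⨆ i, |a i|) * ∑ i, |b i| := mul_comm _ _
  · -- both finite
    have h1p : 1 < p := by
      rcases eq_or_lt_of_le hp with h1 | h1
      · exfalso
        rw [← h1] at hpq
        simp only [one_div, inv_one] at hpq
        have : q⁻¹ = 0 := by
          have hle : 1 + q⁻¹ ≤ 1 + 0 := by rw [hpq, add_zero]
          rw [ENNReal.add_le_add_iff_left ENNReal.one_ne_top] at hle
          exact le_antisymm hle (by simp)
        exact hqt (ENNReal.inv_eq_zero.mp this)
      · exact h1
    have hpr1 : 1 < p.toReal := by
      rw [← ENNReal.toReal_one]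
      exact (ENNReal.toReal_lt_toReal ENNReal.one_ne_top hpt).mpr h1p
    have hsum : 1 / p.toReal + 1 / q.toReal = 1 := by
      have h := congrArg ENNReal.toReal hpq
      rw [ENNReal.toReal_add (by simp [one_div, hp0]) (by simp [one_div, hq0])] at h
      simpa [one_div, ENNReal.toReal_inv] using h
    have hconj : Real.HolderConjugate p.toReal q.toReal :=
      Real.holderConjugate_iff.mpr ⟨hpr1, by simpa [one_div] using hsum⟩
    have := Real.inner_le_Lp_mul_Lq (s := Finset.univ) a b hconj
    simp only [lpNorm, if_neg hpt, if_neg hqt]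
    exact this
/-- **Regret bound for Accurate Mirror Descent (Theorem 4 in the paper).**
For every `f' ∈ F`:
`∑_{t=1}^T (⟨f t, x t⟩ - (1/α)⟨f', x t⟩ - ((α-1)/α)⟨g (t+1), x t⟩)
  ≤ (η α/(2β)) ∑_{t=1}^T ‖x t - x (t-1)‖_q² + R_max²/(η α)`,
where `R_max² = max_{f∈F} R f - min_{f∈F} R f`. -/
theorem amd_regret_bound {n T : ℕ} (p q : ℝ≥0∞)
    (hp : 1 ≤ p) (hq : 1 ≤ q) (hpq : 1 / p + 1 / q = 1)
    (F : Set (Fin n → ℝ)) (hF : F.Nonempty) (hFsub : F ⊆ Set.Icc 0 1)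
    (hFconv : Convex ℝ F) (hFcomp : IsCompact F)
    (η : ℝ) (hη : 0 < η) (α : ℝ) (hα : 1 ≤ α) (β : ℝ) (hβ : 0 < β)
    (R : (Fin n → ℝ) → ℝ) (hdiff : Differentiable ℝ R)
    (hRsc : StronglyConvexOnWrt F β p R)
    (x : ℕ → (Fin n → ℝ)) (hx0 : x 0 = 0)
    (hx : ∀ t ∈ Finset.Icc 1 T, x t ∈ Set.Icc (0 : Fin n → ℝ) 1)
    (f g : ℕ → (Fin n → ℝ))
    (hg1 : g 1 ∈ F ∧ ∀ u ∈ F, R (g 1) ≤ R u) (hf1 : f 1 = g 1)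
    (hg : ∀ t ∈ Finset.Icc 1 T, g (t + 1) ∈ F ∧
      ∀ u ∈ F, η * ip (g (t + 1)) (x t) + bregman R (g (t + 1)) (g t) ≤
        η * ip u (x t) + bregman R u (g t))
    (hf : ∀ t ∈ Finset.Icc 1 T, f (t + 1) ∈ F ∧
      ∀ u ∈ F, η * α * ip (f (t + 1)) (x t) + bregman R (f (t + 1)) (g (t + 1)) ≤
        η * α * ip u (x t) + bregman R u (g (t + 1))) :
    ∀ f' ∈ F,
      (∑ t ∈ Finset.Icc 1 T,
        (ip (f t) (x t) - (1 / α) * ip f' (x t) - ((α - 1) / α) * ip (g (t + 1)) (x t))) ≤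
      η * α / (2 * β) * (∑ t ∈ Finset.Icc 1 T, (lpNorm q (x t - x (t - 1))) ^ 2) +
        (sSup (R '' F) - sInf (R '' F)) / (η * α) := by
  intro f' hf'
  have hα0 : (0:ℝ) < α := lt_of_lt_of_le zero_lt_one hα
  have hη0 : η ≠ 0 := hη.ne'
  have hα0' : α ≠ 0 := hα0.ne'
  have he : (0:ℝ) < η * α := mul_pos hη hα0
  set e := η * α with he_def
  clear_value e
  have he0 : e ≠ 0 := he.ne'
  -- memberships
  have hgmem : ∀ t : ℕ, 1 ≤ t → t ≤ T + 1 → g t ∈ F := by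
    intro t ht1 ht2
    rcases Nat.exists_eq_add_of_le ht1 with ⟨s, rfl⟩
    rcases s with _ | s
    · simpa using hg1.1
    · have h2 : 1 + (s + 1) = (s + 1) + 1 := by omega
      rw [h2]
      exact (hg (s + 1) (Finset.mem_Icc.2 ⟨by omega, by omega⟩)).1
  have hfmem : ∀ t : ℕ, 1 ≤ t → t ≤ T + 1 → f t ∈ F := by
    intro t ht1 ht2
    rcases Nat.exists_eq_add_of_le ht1 with ⟨s, rfl⟩
    rcases s with _ | s
    · simp only [Nat.add_zero]; rw [hf1]; exact hg1.1
    · have h2 : 1 + (s + 1) = (s + 1) + 1 := by omega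
      rw [h2]
      exact (hf (s + 1) (Finset.mem_Icc.2 ⟨by omega, by omega⟩)).1
  have hbreg_nonneg : ∀ a ∈ F, ∀ b ∈ F, 0 ≤ bregman R a b := fun a ha b hb =>
    le_trans (mul_nonneg (by linarith) (sq_nonneg _)) (bregman_ge hdiff hRsc ha hb)
  -- minimality of f t for the shifted objective
  have hfmin : ∀ t ∈ Finset.Icc 1 T, ∀ u ∈ F,
      e * ip (f t) (x (t - 1)) + bregman R (f t) (g t) ≤
      e * ip u (x (t - 1)) + bregman R u (g t) := by
    intro t ht u hu
    rw [Finset.mem_Icc] at ht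
    rcases Nat.exists_eq_add_of_le ht.1 with ⟨s, hts⟩
    rcases s with _ | s
    · have ht1 : t = 1 := by omega
      subst ht1
      have h0 : (1 : ℕ) - 1 = 0 := rfl
      rw [h0, hx0, ip_zero_right, ip_zero_right, hf1, bregman_self]
      simp only [mul_zero, add_zero, zero_add]
      exact hbreg_nonneg u hu (g 1) hg1.1
    · have ht2 : t = (s + 1) + 1 := by omega
      have hs : s + 1 ∈ Finset.Icc 1 T := Finset.mem_Icc.2 ⟨by omega, by omega⟩
      have hmin := (hf (s + 1) hs).2 u hu
      rw [ht2]
      have h3 : (s + 1) + 1 - 1 = s + 1 := by omega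
      rw [h3]
      exact hmin
  -- per-step bound
  have key : ∀ t ∈ Finset.Icc 1 T,
      ip (f t) (x t) - 1 / α * ip f' (x t) - (α - 1) / α * ip (g (t + 1)) (x t) ≤
      e / (2 * β) * lpNorm q (x t - x (t - 1)) ^ 2 +
        (bregman R f' (g t) / e - bregman R f' (g (t + 1)) / e) := by
    intro t ht
    have ht' := ht
    rw [Finset.mem_Icc] at ht'
    have hft : f t ∈ F := hfmem t ht'.1 (by omega)
    have hgt : g t ∈ F := hgmem t ht'.1 (by omega)
    have hgt1 : g (t + 1) ∈ F := hgmem (t + 1) (by omega) (by omega)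
    have hA := opt_fderiv hFconv hdiff hgt1 hf' ((hg t ht).2)
    have hB := opt_fderiv hFconv hdiff hft hgt1 (hfmin t ht)
    have hC : ip (f t - g (t + 1)) (x t - x (t - 1)) ≤
        β / e / 2 * lpNorm p (f t - g (t + 1)) ^ 2 +
          e / (2 * β) * lpNorm q (x t - x (t - 1)) ^ 2 := by
      refine (ip_le_lpNorm_mul hp hq hpq _ _).trans ?_
      have hy := young_aux (c := β / e) (by positivity)
        (lpNorm p (f t - g (t + 1))) (lpNorm q (x t - x (t - 1)))
      have hE : 1 / (2 * (β / e)) = e / (2 * β) := by field_simp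
      rw [hE] at hy
      exact hy
    have hD : β / e / 2 * lpNorm p (f t - g (t + 1)) ^ 2 ≤
        bregman R (g (t + 1)) (f t) / e := by
      have h1 := bregman_ge hdiff hRsc hgt1 hft
      rw [lpNorm_sub_comm] at h1
      rw [le_div_iff₀ he]
      have h2 : β / e / 2 * lpNorm p (f t - g (t + 1)) ^ 2 * e =
          β / 2 * lpNorm p (f t - g (t + 1)) ^ 2 := by
        field_simp
      rw [h2]
      exact h1
    have hterm2 : 1 / α * (ip (g (t + 1)) (x t) - ip f' (x t)) ≤
        (bregman R f' (g t) - bregman R f' (g (t + 1)) - bregman R (g (t + 1)) (g t)) / e := by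
      have h1 : ip (g (t + 1)) (x t) - ip f' (x t) ≤
          (bregman R f' (g t) - bregman R f' (g (t + 1)) - bregman R (g (t + 1)) (g t)) / η := by
        rw [le_div_iff₀ hη]
        nlinarith [hA]
      calc 1 / α * (ip (g (t + 1)) (x t) - ip f' (x t)) ≤
          1 / α * ((bregman R f' (g t) - bregman R f' (g (t + 1)) -
            bregman R (g (t + 1)) (g t)) / η) :=
            mul_le_mul_of_nonneg_left h1 (by positivity)
        _ = (bregman R f' (g t) - bregman R f' (g (t + 1)) - bregman R (g (t + 1)) (g t)) / e := by
            rw [he_def, one_div, inv_mul_eq_div, div_div]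
    have hterm1b : ip (f t) (x (t - 1)) - ip (g (t + 1)) (x (t - 1)) ≤
        (bregman R (g (t + 1)) (g t) - bregman R (g (t + 1)) (f t) - bregman R (f t) (g t)) / e := by
      rw [le_div_iff₀ he]
      nlinarith [hB]
    have hid1 : ip (f t) (x t) - 1 / α * ip f' (x t) - (α - 1) / α * ip (g (t + 1)) (x t) =
        (ip (f t) (x t) - ip (g (t + 1)) (x t)) +
          1 / α * (ip (g (t + 1)) (x t) - ip f' (x t)) := by
      field_simp; ring
    have hid2 : ip (f t) (x t) - ip (g (t + 1)) (x t) =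
        ip (f t - g (t + 1)) (x t - x (t - 1)) +
          (ip (f t) (x (t - 1)) - ip (g (t + 1)) (x (t - 1))) := by
      rw [ip_sub_left, ip_sub_right, ip_sub_right]; ring
    have hnn : 0 ≤ bregman R (f t) (g t) / e :=
      div_nonneg (hbreg_nonneg _ hft _ hgt) he.le
    simp only [sub_div] at hterm2 hterm1b
    linarith [hid1, hid2, hC, hD, hterm1b, hterm2, hnn]
  -- sum up
  have htel := telescope (fun t => bregman R f' (g t) / e) T
  have hsum : (∑ t ∈ Finset.Icc 1 T,
      (ip (f t) (x t) - 1 / α * ip f' (x t) - (α - 1) / α * ip (g (t + 1)) (x t))) ≤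
      e / (2 * β) * (∑ t ∈ Finset.Icc 1 T, lpNorm q (x t - x (t - 1)) ^ 2) +
        (bregman R f' (g 1) / e - bregman R f' (g (T + 1)) / e) := by
    calc (∑ t ∈ Finset.Icc 1 T,
        (ip (f t) (x t) - 1 / α * ip f' (x t) - (α - 1) / α * ip (g (t + 1)) (x t))) ≤
        ∑ t ∈ Finset.Icc 1 T, (e / (2 * β) * lpNorm q (x t - x (t - 1)) ^ 2 +
          (bregman R f' (g t) / e - bregman R f' (g (t + 1)) / e)) := Finset.sum_le_sum key
      _ = e / (2 * β) * (∑ t ∈ Finset.Icc 1 T, lpNorm q (x t - x (t - 1)) ^ 2) +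
          (bregman R f' (g 1) / e - bregman R f' (g (T + 1)) / e) := by
          rw [Finset.sum_add_distrib, ← Finset.mul_sum, htel]
  refine hsum.trans ?_
  have hgrad : (0:ℝ) ≤ fderiv ℝ R (g 1) (f' - g 1) := by
    refine dirDeriv_ge (hdiff (g 1)) (c := fun _ => (0:ℝ)) tendsto_const_nhds ?_
    intro l hl hl1
    rw [mul_zero, add_zero]
    have hmem : g 1 + l • (f' - g 1) ∈ F := by
      have h := hFconv hg1.1 hf' (by linarith : (0:ℝ) ≤ 1 - l) hl.le (by ring)
      rwa [show (1 - l) • g 1 + l • f' = g 1 + l • (f' - g 1) by module] at h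
    exact hg1.2 _ hmem
  have himg : IsCompact (R '' F) := hFcomp.image_of_continuousOn hdiff.continuous.continuousOn
  have hs1 : R f' ≤ sSup (R '' F) := le_csSup himg.bddAbove ⟨f', hf', rfl⟩
  have hs2 : sInf (R '' F) ≤ R (g 1) := csInf_le himg.bddBelow ⟨g 1, hg1.1, rfl⟩
  have hT1 : 0 ≤ bregman R f' (g (T + 1)) :=
    hbreg_nonneg _ hf' _ (hgmem (T + 1) (by omega) (by omega))
  have hb1 : bregman R f' (g 1) - bregman R f' (g (T + 1)) ≤ sSup (R '' F) - sInf (R '' F) := by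
    simp only [bregman] at hT1 ⊢
    linarith [hgrad, hs1, hs2, hT1]
  rw [← sub_div]
  gcongr
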